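/- arXiv:1008.1455 — 3 statements merged into one kernel-verified Lean document; each statement's English description precedes it below -/
import Mathlib

section
/- Let p be a positive integer, let c_1 > c_2 > … > c_p > 0 be real numbers, and let 0 ≤ a ≤ p. For any x = (x_1, …, x_p) with each x_i ∈ [0, 1] and Σ_{i=1}^p x_i = a, one has Σ_{i=1}^p c_i x_i ≤ Σ_{i=1}^p c_i x̂_i, where x̂_i = min(1, max(0, a - i + 1)). -/
theorem stmt_4 (p : ℕ) (hp : 0 < p) (c : ℕ → ℝ)
    (hcpos : ∀ i ∈ Finset.Icc 1 p, 0 < c i)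
    (hcdec : ∀ i j : ℕ, 1 ≤ i → i < j → j ≤ p → c j < c i)
    (a : ℝ) (ha0 : 0 ≤ a) (hap : a ≤ p)
    (x : ℕ → ℝ) (hx : ∀ i ∈ Finset.Icc 1 p, x i ∈ Set.Icc (0 : ℝ) 1)
    (hsum : ∑ i ∈ Finset.Icc 1 p, x i = a) :
    ∑ i ∈ Finset.Icc 1 p, c i * x i ≤
      ∑ i ∈ Finset.Icc 1 p, c i * min 1 (max 0 (a - (i : ℝ) + 1)) := by
  set xh : ℕ → ℝ := fun i => min 1 (max 0 (a - (i : ℝ) + 1)) with hxh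
  have hconv : ∀ f : ℕ → ℝ,
      ∑ i ∈ Finset.Icc 1 p, f i = ∑ i ∈ Finset.range p, f (i + 1) := by
    intro f
    rw [← Finset.Ico_add_one_right_eq_Icc, Finset.sum_Ico_eq_sum_range]
    refine Finset.sum_congr (by norm_num) fun i _ => by rw [add_comm]
  -- prefix sums of xh
  have hpref : ∀ k : ℕ, ∑ i ∈ Finset.range k, xh (i + 1) = min (k : ℝ) a := by
    intro k
    induction k with
    | zero => simp [min_eq_left ha0]
    | succ k ih =>
      rw [Finset.sum_range_succ, ih]
      have : xh (k + 1) = min 1 (max 0 (a - k)) := by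
        simp only [hxh]
        push_cast
        ring_nf
      rw [this]
      push_cast
      rcases le_total a (k : ℝ) with h | h
      · rw [min_eq_right h, max_eq_left (by linarith), min_eq_right (by norm_num),
          min_eq_right (by linarith)]
        ring
      · rw [min_eq_left h, max_eq_right (by linarith)]
        rcases le_total a ((k : ℝ) + 1) with h2 | h2
        · rw [min_eq_right (by linarith), min_eq_right h2]; ring
        · rw [min_eq_left (by linarith), min_eq_left h2]
  -- prefix sums of x are bounded
  have hxsum : ∑ i ∈ Finset.range p, x (i + 1) = a := by rw [← hconv]; exact hsum
  have hxmem : ∀ i ∈ Finset.range p, x (i + 1) ∈ Set.Icc (0 : ℝ) 1 := by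
    intro i hi
    exact hx (i + 1) (Finset.mem_Icc.2 ⟨by omega, by
      have := Finset.mem_range.1 hi; omega⟩)
  have hxpref : ∀ k : ℕ, k ≤ p →
      ∑ i ∈ Finset.range k, x (i + 1) ≤ min (k : ℝ) a := by
    intro k hk
    refine le_min ?_ ?_
    · calc ∑ i ∈ Finset.range k, x (i + 1) ≤ ∑ i ∈ Finset.range k, (1 : ℝ) := by
            refine Finset.sum_le_sum fun i hi => ?_
            exact (hxmem i (Finset.mem_range.2 (lt_of_lt_of_le (Finset.mem_range.1 hi) hk))).2
        _ = (k : ℝ) := by simp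
    · rw [← hxsum]
      refine Finset.sum_le_sum_of_subset_of_nonneg
        (Finset.range_subset_range.2 hk) fun i hi _ => (hxmem i hi).1
  -- the difference function and its prefix sums
  set d : ℕ → ℝ := fun i => xh (i + 1) - x (i + 1) with hd
  have hD : ∀ k : ℕ, k ≤ p → 0 ≤ ∑ i ∈ Finset.range k, d i := by
    intro k hk
    have : ∑ i ∈ Finset.range k, d i
        = ∑ i ∈ Finset.range k, xh (i + 1) - ∑ i ∈ Finset.range k, x (i + 1) := by
      simp [hd, Finset.sum_sub_distrib]
    rw [this, hpref k]
    linarith [hxpref k hk]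
  have hDp : ∑ i ∈ Finset.range p, d i = 0 := by
    have : ∑ i ∈ Finset.range p, d i
        = ∑ i ∈ Finset.range p, xh (i + 1) - ∑ i ∈ Finset.range p, x (i + 1) := by
      simp [hd, Finset.sum_sub_distrib]
    rw [this, hpref p, hxsum, min_eq_right hap, sub_self]
  -- Abel summation
  have key : (0 : ℝ) ≤ ∑ i ∈ Finset.range p, (fun i => c (i + 1)) i • d i := by
    rw [Finset.sum_range_by_parts (fun i => c (i + 1)) d p, hDp, smul_zero, zero_sub]
    rw [neg_nonneg]
    refine Finset.sum_nonpos fun i hi => ?_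
    have hi' : i < p - 1 := Finset.mem_range.1 hi
    have h1 : c (i + 1 + 1) - c (i + 1) ≤ 0 := by
      have := hcdec (i + 1) (i + 2) (by omega) (by omega) (by omega)
      linarith
    have h2 : 0 ≤ ∑ j ∈ Finset.range (i + 1), d j := hD (i + 1) (by omega)
    simpa [smul_eq_mul] using mul_nonpos_of_nonpos_of_nonneg h1 h2
  have : ∑ i ∈ Finset.range p, c (i + 1) * x (i + 1)
      ≤ ∑ i ∈ Finset.range p, c (i + 1) * xh (i + 1) := by
    have expand : ∑ i ∈ Finset.range p, (fun i => c (i + 1)) i • d i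
        = ∑ i ∈ Finset.range p, c (i + 1) * xh (i + 1)
          - ∑ i ∈ Finset.range p, c (i + 1) * x (i + 1) := by
      simp [hd, smul_eq_mul, mul_sub, Finset.sum_sub_distrib]
    linarith [key, expand ▸ key]
  calc ∑ i ∈ Finset.Icc 1 p, c i * x i
      = ∑ i ∈ Finset.range p, c (i + 1) * x (i + 1) := hconv fun i => c i * x i
    _ ≤ ∑ i ∈ Finset.range p, c (i + 1) * xh (i + 1) := this
    _ = ∑ i ∈ Finset.Icc 1 p, c i * xh i := (hconv fun i => c i * xh i).symm
end

section
/- Let k ≥ 1 be an integer and 0 < r < 1. Define g(y) = k + y·(1 - (k+1)r)/r on the interval I = (r, min(r/(1-r), 1)]. Then the infimum of g over I equals: (k+1)(1 - r) if 0 < r ≤ 1/(k+1); 1 + k(1 - 2r)/(1 - r) if 1/(k+1) ≤ r ≤ 1/2; and (1 - r)/r if 1/2 ≤ r ≤ 1. -/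
lemma aff_inf_right (A c a b : ℝ) (hab : a < b) (hc : c ≤ 0) :
    sInf ((fun y : ℝ => A + y * c) '' Set.Ioc a b) = A + b * c := by
  apply IsLeast.csInf_eq
  constructor
  · exact ⟨b, ⟨hab, le_refl b⟩, rfl⟩
  · rintro x ⟨y, ⟨hy1, hy2⟩, rfl⟩
    dsimp only
    nlinarith

lemma aff_inf_left (A c a b : ℝ) (hab : a < b) (hc : 0 ≤ c) :
    sInf ((fun y : ℝ => A + y * c) '' Set.Ioc a b) = A + a * c := by
  rcases eq_or_lt_of_le hc with h | h
  · subst h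
    have : (fun y : ℝ => A + y * 0) '' Set.Ioc a b = {A} := by
      have hne : (Set.Ioc a b).Nonempty := ⟨b, hab, le_refl b⟩
      simpa using hne.image_const A
    rw [this, csInf_singleton, mul_zero, add_zero]
  · have himg : (fun y : ℝ => A + y * c) '' Set.Ioc a b
        = Set.Ioc (A + a * c) (A + b * c) := by
      ext x
      constructor
      · rintro ⟨y, ⟨hy1, hy2⟩, rfl⟩
        dsimp only
        constructor <;> nlinarith
      · rintro ⟨hx1, hx2⟩
        refine ⟨(x - A) / c, ⟨?_, ?_⟩, ?_⟩
        · rw [lt_div_iff₀ h]; nlinarith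
        · rw [div_le_iff₀ h]; nlinarith
        · field_simp; ring
    rw [himg]
    exact csInf_Ioc (by nlinarith)

theorem stmt_10 (k : ℕ) (hk : 1 ≤ k) (r : ℝ) (hr0 : 0 < r) (hr1 : r < 1) :
    (r ≤ 1 / ((k : ℝ) + 1) →
      sInf ((fun y : ℝ => (k : ℝ) + y * (1 - ((k : ℝ) + 1) * r) / r) ''
        Set.Ioc r (min (r / (1 - r)) 1)) = ((k : ℝ) + 1) * (1 - r)) ∧
    (1 / ((k : ℝ) + 1) ≤ r → r ≤ 1 / 2 →
      sInf ((fun y : ℝ => (k : ℝ) + y * (1 - ((k : ℝ) + 1) * r) / r) ''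
        Set.Ioc r (min (r / (1 - r)) 1)) = 1 + (k : ℝ) * (1 - 2 * r) / (1 - r)) ∧
    (1 / 2 ≤ r →
      sInf ((fun y : ℝ => (k : ℝ) + y * (1 - ((k : ℝ) + 1) * r) / r) ''
        Set.Ioc r (min (r / (1 - r)) 1)) = (1 - r) / r) := by
  have h1r : (0:ℝ) < 1 - r := by linarith
  set c : ℝ := (1 - ((k : ℝ) + 1) * r) / r with hc
  have hfun : (fun y : ℝ => (k : ℝ) + y * (1 - ((k : ℝ) + 1) * r) / r)
      = fun y : ℝ => (k : ℝ) + y * c := by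
    funext y; rw [hc, mul_div_assoc]
  have hkpos : (0:ℝ) < (k : ℝ) + 1 := by positivity
  have hmgt : r < min (r / (1 - r)) 1 := by
    apply lt_min
    · rw [lt_div_iff₀ h1r]; nlinarith
    · exact hr1
  refine ⟨?_, ?_, ?_⟩
  · intro h
    have h' : ((k : ℝ) + 1) * r ≤ 1 := by
      rw [le_div_iff₀ hkpos] at h; linarith
    have hcpos : 0 ≤ c := div_nonneg (by linarith) hr0.le
    rw [hfun, aff_inf_left _ _ _ _ hmgt hcpos, hc]
    field_simp
    ring
  · intro h1 h2
    have h' : 1 ≤ ((k : ℝ) + 1) * r := by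
      rw [div_le_iff₀ hkpos] at h1; linarith
    have hcneg : c ≤ 0 := div_nonpos_of_nonpos_of_nonneg (by linarith) hr0.le
    have hmin : min (r / (1 - r)) 1 = r / (1 - r) := by
      apply min_eq_left
      rw [div_le_one h1r]; linarith
    rw [hfun, hmin, aff_inf_right _ _ _ _ (hmin ▸ hmgt) hcneg, hc]
    field_simp
    ring
  · intro h
    have h' : 1 ≤ ((k : ℝ) + 1) * r := by nlinarith [(by exact_mod_cast hk : (1:ℝ) ≤ (k:ℝ))]
    have hcneg : c ≤ 0 := div_nonpos_of_nonpos_of_nonneg (by linarith) hr0.le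
    have hmin : min (r / (1 - r)) 1 = 1 := by
      apply min_eq_right
      rw [le_div_iff₀ h1r]; linarith
    rw [hfun, hmin, aff_inf_right _ _ _ _ (hmin ▸ hmgt) hcneg, hc]
    field_simp
    ring
end

section
/- Let k ≥ 2 be an integer. Define d_DDF(r) = (k+1)(1-r) for 0 ≤ r ≤ 1/(k+1) and d_DDF(r) = 1 + k(1-2r)/(1-r) for 1/(k+1) ≤ r ≤ 1/2, and define d_SCF(r) = (k+1) - 2kr for 0 ≤ r ≤ 1/2. Then d_DDF(r) ≥ d_SCF(r) for all r ∈ [0, 1/2], with strict inequality for 0 < r < 1/2. -/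
theorem stmt_13 (k : ℕ) (hk : 2 ≤ k) (r : ℝ) (hr0 : 0 ≤ r) (hr2 : r ≤ 1 / 2) :
    (if r ≤ 1 / ((k : ℝ) + 1) then ((k : ℝ) + 1) * (1 - r)
      else 1 + (k : ℝ) * (1 - 2 * r) / (1 - r)) ≥ ((k : ℝ) + 1) - 2 * (k : ℝ) * r ∧
    (0 < r → r < 1 / 2 →
      (if r ≤ 1 / ((k : ℝ) + 1) then ((k : ℝ) + 1) * (1 - r)
        else 1 + (k : ℝ) * (1 - 2 * r) / (1 - r)) > ((k : ℝ) + 1) - 2 * (k : ℝ) * r) := by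
  have hk2 : (2:ℝ) ≤ (k:ℝ) := by exact_mod_cast hk
  have h1 : (0:ℝ) < 1 - r := by linarith
  split_ifs with h
  · constructor
    · nlinarith
    · intro hp _; nlinarith
  · have e : 1 + (k:ℝ) * (1 - 2 * r) / (1 - r) - (((k:ℝ) + 1) - 2 * (k:ℝ) * r)
        = (k:ℝ) * r * (1 - 2 * r) / (1 - r) := by
      field_simp
      ring
    have hp : 0 < r := by
      by_contra hc
      push_neg at hc
      have : r = 0 := le_antisymm hc hr0
      apply h
      rw [this]
      positivity
    constructor
    · have : (0:ℝ) ≤ (k:ℝ) * r * (1 - 2 * r) / (1 - r) :=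
        div_nonneg (mul_nonneg (mul_nonneg (by linarith) hr0) (by linarith)) h1.le
      linarith
    · intro _ hlt
      have : (0:ℝ) < (k:ℝ) * r * (1 - 2 * r) / (1 - r) :=
        div_pos (mul_pos (mul_pos (by linarith) hp) (by linarith)) h1
      linarith
end
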